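/- A Banach space X is hereditarily indecomposable if and only if for all infinite-dimensional closed subspaces Z, W ⊆ X and every ε > 0, there exist z ∈ Z and w ∈ W such that ‖z − w‖ < ε‖z + w‖. -/

import Mathlib

set_option maxHeartbeats 1000000


/-- An infinite-dimensional Banach space is *hereditarily indecomposable* if no closed
infinite-dimensional subspace of it is the (topological) direct sum of two
infinite-dimensional closed subspaces. -/
def HereditarilyIndecomposable (X : Type*) [NormedAddCommGroup X] [NormedSpace ℝ X] : Prop :=
  ∀ Z W₁ W₂ : Submodule ℝ X,
    IsClosed (Z : Set X) → ¬ FiniteDimensional ℝ Z →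
    IsClosed (W₁ : Set X) → ¬ FiniteDimensional ℝ W₁ →
    IsClosed (W₂ : Set X) → ¬ FiniteDimensional ℝ W₂ →
    W₁ ⊓ W₂ = ⊥ → W₁ ⊔ W₂ = Z → False

/-- a Banach space `X` is hereditarily indecomposable iff for all
infinite-dimensional closed subspaces `Z, W ⊆ X` and every `ε > 0` there are `z ∈ Z`, `w ∈ W`
with `‖z - w‖ < ε * ‖z + w‖`. -/
theorem hereditarilyIndecomposable_iff (X : Type*) [NormedAddCommGroup X] [NormedSpace ℝ X]
    [CompleteSpace X] (hX : ¬ FiniteDimensional ℝ X) :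
    HereditarilyIndecomposable X ↔
      ∀ Z W : Submodule ℝ X,
        IsClosed (Z : Set X) → ¬ FiniteDimensional ℝ Z →
        IsClosed (W : Set X) → ¬ FiniteDimensional ℝ W →
        ∀ ε : ℝ, 0 < ε → ∃ z ∈ Z, ∃ w ∈ W, ‖z - w‖ < ε * ‖z + w‖ := by
  constructor
  · -- forward
    intro hHI Z W hZc hZf hWc hWf ε hε
    by_contra hcon
    push_neg at hcon
    -- hcon : ∀ z ∈ Z, ∀ w ∈ W, ε * ‖z + w‖ ≤ ‖z - w‖
    have hsym : ∀ z ∈ Z, ∀ w ∈ W, ε * ‖z - w‖ ≤ ‖z + w‖ := by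
      intro z hz w hw
      have := hcon z hz (-w) (W.neg_mem hw)
      simpa [sub_neg_eq_add, sub_eq_add_neg] using this
    have hinf : Z ⊓ W = ⊥ := by
      rw [eq_bot_iff]
      rintro x ⟨hxZ, hxW⟩
      have h1 := hcon x hxZ x hxW
      simp only [sub_self, norm_zero] at h1
      have : ‖x + x‖ ≤ 0 := nonpos_of_mul_nonpos_right (by linarith [mul_nonneg hε.le (norm_nonneg (x + x))]) hε
      have hx0 : x + x = 0 := by
        have := norm_nonneg (x + x); have : ‖x + x‖ = 0 := le_antisymm ‹‖x+x‖ ≤ 0› this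
        exact norm_eq_zero.mp this
      have : x = 0 := by
        have h2 : (2 : ℝ) • x = 0 := by rw [two_smul]; exact hx0
        rcases smul_eq_zero.mp h2 with h | h
        · norm_num at h
        · exact h
      simp [this]
    haveI : CompleteSpace Z := hZc.completeSpace_coe
    haveI : CompleteSpace W := hWc.completeSpace_coe
    set f : (Z × W) →L[ℝ] X :=
      Z.subtypeL.comp (ContinuousLinearMap.fst ℝ Z W) +
        W.subtypeL.comp (ContinuousLinearMap.snd ℝ Z W) with hf
    have hfapp : ∀ p : Z × W, f p = (p.1 : X) + (p.2 : X) := fun p => rfl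
    set K : ℝ := (1 + ε⁻¹) / 2 with hK
    have hK0 : 0 ≤ K := by positivity
    have hbound : ∀ p : Z × W, ‖p‖ ≤ K * ‖f p‖ := by
      rintro ⟨z, w⟩
      have hz := z.2; have hw := w.2
      have hsub : ‖(z : X) - w‖ ≤ ε⁻¹ * ‖(z : X) + w‖ := by
        have h := mul_le_mul_of_nonneg_left (hsym z hz w hw) (inv_nonneg.mpr hε.le)
        rw [← mul_assoc, inv_mul_cancel₀ hε.ne', one_mul] at h
        exact h
      have h2z : 2 * ‖(z : X)‖ ≤ (1 + ε⁻¹) * ‖(z : X) + w‖ := by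
        have : (2 : ℝ) * ‖(z : X)‖ = ‖((z : X) + w) + ((z : X) - w)‖ := by
          rw [show ((z : X) + w) + ((z : X) - w) = (2 : ℝ) • (z : X) by module]
          rw [norm_smul]; simp
        rw [this]
        calc ‖((z : X) + w) + ((z : X) - w)‖ ≤ ‖(z : X) + w‖ + ‖(z : X) - w‖ := norm_add_le _ _
          _ ≤ ‖(z : X) + w‖ + ε⁻¹ * ‖(z : X) + w‖ := by linarith
          _ = (1 + ε⁻¹) * ‖(z : X) + w‖ := by ring
      have h2w : 2 * ‖(w : X)‖ ≤ (1 + ε⁻¹) * ‖(z : X) + w‖ := by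
        have : (2 : ℝ) * ‖(w : X)‖ = ‖((z : X) + w) - ((z : X) - w)‖ := by
          rw [show ((z : X) + w) - ((z : X) - w) = (2 : ℝ) • (w : X) by module]
          rw [norm_smul]; simp
        rw [this]
        calc ‖((z : X) + w) - ((z : X) - w)‖ ≤ ‖(z : X) + w‖ + ‖(z : X) - w‖ := norm_sub_le _ _
          _ ≤ ‖(z : X) + w‖ + ε⁻¹ * ‖(z : X) + w‖ := by linarith
          _ = (1 + ε⁻¹) * ‖(z : X) + w‖ := by ring
      have hmax : ‖((z, w) : ↥Z × ↥W)‖ = max ‖(z : X)‖ ‖(w : X)‖ := rfl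
      rw [hfapp, hmax, hK, max_le_iff]
      constructor <;> linarith
    have hanti : AntilipschitzWith K.toNNReal f := by
      apply f.antilipschitz_of_bound
      intro x
      calc ‖x‖ ≤ K * ‖f x‖ := hbound x
        _ = K.toNNReal * ‖f x‖ := by rw [Real.coe_toNNReal _ hK0]
    have hrange : IsClosed (Set.range f) := hanti.isClosed_range f.uniformContinuous
    have hsupset : ((Z ⊔ W : Submodule ℝ X) : Set X) = Set.range f := by
      ext x
      simp only [SetLike.mem_coe, Submodule.mem_sup, Set.mem_range]
      constructor
      · rintro ⟨y, hy, z, hz, rfl⟩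
        exact ⟨(⟨y, hy⟩, ⟨z, hz⟩), rfl⟩
      · rintro ⟨⟨y, z⟩, rfl⟩
        exact ⟨y, y.2, z, z.2, (hfapp (y, z)).symm⟩
    have hsupc : IsClosed ((Z ⊔ W : Submodule ℝ X) : Set X) := hsupset ▸ hrange
    have hsupf : ¬ FiniteDimensional ℝ (Z ⊔ W : Submodule ℝ X) := by
      intro hfin
      exact hZf (Submodule.finiteDimensional_of_le (le_sup_left : Z ≤ Z ⊔ W))
    exact hHI (Z ⊔ W) Z W hsupc hsupf hZc hZf hWc hWf hinf rfl
  · -- backward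
    intro hcond Z W₁ W₂ hZc hZf hW₁c hW₁f hW₂c hW₂f hinf hsup
    haveI : CompleteSpace Z := hZc.completeSpace_coe
    haveI : CompleteSpace W₁ := hW₁c.completeSpace_coe
    haveI : CompleteSpace W₂ := hW₂c.completeSpace_coe
    have hmem : ∀ (a : W₁) (b : W₂), (a : X) + (b : X) ∈ Z := fun a b =>
      hsup ▸ Submodule.add_mem_sup a.2 b.2
    set f0 : (W₁ × W₂) →L[ℝ] X :=
      W₁.subtypeL.comp (ContinuousLinearMap.fst ℝ W₁ W₂) +
        W₂.subtypeL.comp (ContinuousLinearMap.snd ℝ W₁ W₂) with hf0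
    set f : (W₁ × W₂) →L[ℝ] Z := f0.codRestrict Z (fun p => hmem p.1 p.2) with hfdef
    have hfapp : ∀ p : W₁ × W₂, (f p : X) = (p.1 : X) + (p.2 : X) := fun p => rfl
    have hker : LinearMap.ker (f : (W₁ × W₂) →ₗ[ℝ] Z) = ⊥ := by
      rw [LinearMap.ker_eq_bot']
      rintro ⟨a, b⟩ hab
      have h0 : (a : X) + (b : X) = 0 := by
        have := congrArg (Subtype.val) hab
        simpa [hfapp] using this
      have ha : (a : X) ∈ W₁ ⊓ W₂ := ⟨a.2, by
        rw [eq_neg_of_add_eq_zero_left h0]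
        exact W₂.neg_mem b.2⟩
      rw [hinf] at ha
      have ha0 : (a : X) = 0 := ha
      have hb0 : (b : X) = 0 := by rw [ha0, zero_add] at h0; exact h0
      ext <;> simp [ha0, hb0]
    have hrange : LinearMap.range (f : (W₁ × W₂) →ₗ[ℝ] Z) = ⊤ := by
      rw [LinearMap.range_eq_top]
      rintro ⟨x, hx⟩
      rw [← hsup] at hx
      obtain ⟨y, hy, z, hz, hyz⟩ := Submodule.mem_sup.mp hx
      exact ⟨(⟨y, hy⟩, ⟨z, hz⟩), Subtype.ext (by simpa [hfapp] using hyz)⟩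
    set e := ContinuousLinearEquiv.ofBijective f hker hrange with he
    set g : ↥Z →L[ℝ] (↥W₁ × ↥W₂) := e.symm.toContinuousLinearMap with hg
    set C : ℝ := ‖g‖ + 1 with hC
    have hC0 : 0 < C := by positivity
    have key : ∀ (a : W₁) (b : W₂), max ‖(a : X)‖ ‖(b : X)‖ ≤ C * ‖(a : X) + (b : X)‖ := by
      intro a b
      have h1 : e.symm (f (a, b)) = (a, b) := e.symm_apply_apply (a, b)
      have h2 : ‖((a, b) : W₁ × W₂)‖ ≤ ‖g‖ * ‖f (a, b)‖ := by
        have hb := g.le_opNorm (f (a, b))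
        have hgapp : g (f (a, b)) = (a, b) := h1
        rw [hgapp] at hb
        exact hb
      have h3 : ‖f (a, b)‖ = ‖(a : X) + (b : X)‖ := rfl
      have h4 : ‖((a, b) : W₁ × W₂)‖ = max ‖(a : X)‖ ‖(b : X)‖ := rfl
      rw [h3, h4] at h2
      nlinarith [norm_nonneg ((a : X) + (b : X)), norm_nonneg g]
    obtain ⟨z, hz, w, hw, hzw⟩ := hcond W₁ W₂ hW₁c hW₁f hW₂c hW₂f (1 / (2 * C)) (by positivity)
    have h1 : ‖z - w‖ ≥ 0 := norm_nonneg _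
    have h2 : max ‖z‖ ‖(-w : X)‖ ≤ C * ‖z - w‖ := by
      have := key ⟨z, hz⟩ ⟨-w, W₂.neg_mem hw⟩
      simpa [sub_eq_add_neg] using this
    have h3 : ‖z + w‖ ≤ 2 * C * ‖z - w‖ := by
      have hz' : ‖z‖ ≤ C * ‖z - w‖ := le_trans (le_max_left _ _) h2
      have hw' : ‖w‖ ≤ C * ‖z - w‖ := by
        have := le_trans (le_max_right _ _) h2
        simpa using this
      calc ‖z + w‖ ≤ ‖z‖ + ‖w‖ := norm_add_le _ _
        _ ≤ 2 * C * ‖z - w‖ := by linarith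
    have : ‖z - w‖ < ‖z - w‖ := by
      calc ‖z - w‖ < (1 / (2 * C)) * ‖z + w‖ := hzw
        _ ≤ (1 / (2 * C)) * (2 * C * ‖z - w‖) := by
            apply mul_le_mul_of_nonneg_left h3; positivity
        _ = ‖z - w‖ := by field_simp
    exact lt_irrefl _ this
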